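/- Let d ≥ 1 and let f : ℝ^d → [0,∞) be integrable, even (f(−w) = f(w)), and such that its Fourier transform f̂ is nonnegative. Then for every T > 0 there exists a constant C_T > 0, depending only on d and T, such that for every x ∈ ℝ^d, ∫₀^T ∫_{ℝ^d} ∫_{ℝ^d} p(s,x,y)·p(s,x,z)·f(y−z) dy dz ds ≤ C_T·∫_{ℝ^d} f̂(ξ)/(1+|ξ|²) dξ, where both sides are allowed to be infinite. -/

import Mathlib

open MeasureTheory Real

/-- The Gaussian heat kernel on `ℝ^d`: `p(t,x,y) = (2πt)^(-d/2) exp(-|x-y|²/(2t))`. -/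
noncomputable def gaussKernelEuc (d : ℕ) (t : ℝ) (x y : EuclideanSpace ℝ (Fin d)) : ℝ :=
  (2 * Real.pi * t) ^ (-(d:ℝ)/2) * Real.exp (-‖x - y‖^2 / (2*t))

/-- The Fourier transform `f̂(ξ) = ∫ exp(-2πi⟨ξ,w⟩) f(w) dw` of an even function `f`, which is
real-valued and hence equals the cosine transform. -/
noncomputable def cosFourier (d : ℕ) (f : EuclideanSpace ℝ (Fin d) → ℝ)
    (ξ : EuclideanSpace ℝ (Fin d)) : ℝ :=
  ∫ w, Real.cos (2 * Real.pi * (inner ℝ ξ w : ℝ)) * f w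

open scoped RealInnerProductSpace ENNReal

lemma gauss_cos {d : ℕ} {b : ℝ} (hb : 0 < b) (t : EuclideanSpace ℝ (Fin d)) :
    ∫ v : EuclideanSpace ℝ (Fin d), Real.exp (-b * ‖v‖^2) * Real.cos (2 * π * ⟪t, v⟫) =
      (π / b) ^ ((d:ℝ)/2) * Real.exp (-(π^2) * ‖t‖^2 / b) := by
  have hb' : 0 < (b:ℂ).re := by simpa using hb
  have h := GaussianFourier.integral_cexp_neg_mul_sq_norm_add (V := EuclideanSpace ℝ (Fin d))
    hb' (2 * π * Complex.I) t
  have hint := GaussianFourier.integrable_cexp_neg_mul_sq_norm_add (V := EuclideanSpace ℝ (Fin d))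
    hb' (2 * π * Complex.I) t
  have hre := congrArg (fun z : ℂ => RCLike.re (K := ℂ) z) h
  rw [← integral_re hint] at hre
  simp only [RCLike.re_to_complex, finrank_euclideanSpace_fin] at hre
  calc ∫ v : EuclideanSpace ℝ (Fin d), Real.exp (-b * ‖v‖^2) * Real.cos (2 * π * ⟪t, v⟫)
      = ∫ v : EuclideanSpace ℝ (Fin d),
          (Complex.exp (-(b:ℂ) * ‖v‖^2 + 2 * π * Complex.I * (⟪t, v⟫ : ℝ))).re := by
        congr 1; funext v
        have harg : (-(b:ℂ) * ‖v‖^2 + 2 * π * Complex.I * (⟪t, v⟫ : ℝ))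
            = ((-b * ‖v‖^2 : ℝ) : ℂ) + ((2 * π * ⟪t, v⟫ : ℝ) : ℂ) * Complex.I := by
          push_cast; ring
        rw [harg, Complex.exp_add, ← Complex.ofReal_exp, Complex.re_ofReal_mul,
          Complex.exp_ofReal_mul_I_re]
    _ = ((↑π / ↑b) ^ ((d : ℂ) / 2) * Complex.exp ((2 * ↑π * Complex.I) ^ 2 * ↑‖t‖ ^ 2 / (4 * ↑b))).re := hre
    _ = (π / b) ^ ((d:ℝ)/2) * Real.exp (-(π^2) * ‖t‖^2 / b) := by
        have h2 : ((2 * (π:ℂ) * Complex.I) ^ 2 * (‖t‖:ℂ) ^ 2 / (4 * (b:ℂ)))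
            = ((-(π^2) * ‖t‖^2 / b : ℝ) : ℂ) := by
          have : Complex.I ^ 2 = -1 := Complex.I_sq
          push_cast
          rw [mul_pow, mul_pow, this]
          ring
        rw [h2, ← Complex.ofReal_exp,
          show ((π:ℂ)/(b:ℂ)) = ((π/b : ℝ) : ℂ) by push_cast; ring,
          show ((d:ℂ)/2) = (((d:ℝ)/2 : ℝ) : ℂ) by push_cast; ring,
          ← Complex.ofReal_cpow (by positivity), ← Complex.ofReal_mul, Complex.ofReal_re]

lemma integrable_rexp_gauss {d : ℕ} {b : ℝ} (hb : 0 < b) :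
    Integrable (fun v : EuclideanSpace ℝ (Fin d) => rexp (-b * ‖v‖^2)) := by
  have hb' : 0 < (b:ℂ).re := by simpa using hb
  have := (GaussianFourier.integrable_cexp_neg_mul_sq_norm_add (V := EuclideanSpace ℝ (Fin d))
    hb' 0 0).norm
  simpa [Complex.norm_exp, ← Complex.ofReal_pow] using this

lemma gaussKernelEuc_nonneg {d : ℕ} {t : ℝ} (ht : 0 < t) (x y : EuclideanSpace ℝ (Fin d)) :
    0 ≤ gaussKernelEuc d t x y := by
  rw [gaussKernelEuc]; positivity

lemma gaussKernelEuc_continuous {d : ℕ} {s : ℝ} (x : EuclideanSpace ℝ (Fin d)) :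
    Continuous (fun y => gaussKernelEuc d s x y) := by
  unfold gaussKernelEuc
  exact continuous_const.mul (Real.continuous_exp.comp
    (((continuous_const.sub continuous_id).norm.pow 2).neg.div_const _))

lemma lintegral_gauss_prod {d : ℕ} {s : ℝ} (hs : 0 < s) (x w : EuclideanSpace ℝ (Fin d)) :
    ∫⁻ y, ENNReal.ofReal (gaussKernelEuc d s x y * gaussKernelEuc d s x (y - w))
      = ENNReal.ofReal ((4*π*s) ^ (-(d:ℝ)/2) * rexp (-‖w‖^2 / (4*s))) := by
  set m : EuclideanSpace ℝ (Fin d) := x + (2⁻¹:ℝ) • w with hm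
  have hpt : ∀ y, gaussKernelEuc d s x y * gaussKernelEuc d s x (y - w)
      = ((2*π*s) ^ (-(d:ℝ)/2) * (2*π*s) ^ (-(d:ℝ)/2) * rexp (-‖w‖^2 / (4*s)))
        * rexp (-(1/s) * ‖m - y‖^2) := by
    intro y
    have hxw : x - (y - w) = (x - y) + w := by abel
    have hmy : m - y = (x - y) + (2⁻¹:ℝ) • w := by rw [hm]; abel
    have key : ‖x - y‖^2 + ‖(x - y) + w‖^2 = 2*‖(x - y) + (2⁻¹:ℝ)•w‖^2 + ‖w‖^2/2 := by
      rw [norm_add_sq_real, norm_add_sq_real, real_inner_smul_right, norm_smul]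
      simp only [norm_inv, Real.norm_ofNat, mul_pow, inv_pow]
      ring
    rw [gaussKernelEuc, gaussKernelEuc, hxw, hmy]
    rw [show ((2*π*s) ^ (-(d:ℝ)/2) * rexp (-‖x - y‖^2 / (2*s))) *
          ((2*π*s) ^ (-(d:ℝ)/2) * rexp (-‖(x - y) + w‖^2 / (2*s)))
        = (2*π*s) ^ (-(d:ℝ)/2) * (2*π*s) ^ (-(d:ℝ)/2) *
          (rexp (-‖x - y‖^2 / (2*s)) * rexp (-‖(x - y) + w‖^2 / (2*s))) by ring,
      ← Real.exp_add]
    have hexp : -‖x - y‖^2 / (2*s) + -‖(x - y) + w‖^2 / (2*s)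
        = -‖w‖^2 / (4*s) + -(1/s) * ‖(x - y) + (2⁻¹:ℝ)•w‖^2 := by
      calc -‖x - y‖^2 / (2*s) + -‖(x - y) + w‖^2 / (2*s)
          = -(‖x - y‖^2 + ‖(x - y) + w‖^2)/(2*s) := by ring
        _ = -(2*‖(x - y) + (2⁻¹:ℝ)•w‖^2 + ‖w‖^2/2)/(2*s) := by rw [key]
        _ = -‖w‖^2 / (4*s) + -(1/s) * ‖(x - y) + (2⁻¹:ℝ)•w‖^2 := by field_simp; ring
    rw [show -‖x - y‖^2 / (2*s) + -‖(x - y) + w‖^2 / (2*s)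
        = -‖w‖^2 / (4*s) + -(1/s) * ‖(x - y) + (2⁻¹:ℝ)•w‖^2 from hexp, Real.exp_add]
    ring
  simp only [hpt]
  set c : ℝ := (2*π*s) ^ (-(d:ℝ)/2) * (2*π*s) ^ (-(d:ℝ)/2) * rexp (-‖w‖^2 / (4*s)) with hc
  have hc0 : 0 ≤ c := by positivity
  have hint : Integrable (fun y : EuclideanSpace ℝ (Fin d) => c * rexp (-(1/s) * ‖m - y‖^2)) := by
    exact ((integrable_rexp_gauss (by positivity : (0:ℝ) < 1/s)).comp_sub_left m).const_mul c
  rw [← ofReal_integral_eq_lintegral_ofReal hint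
    (Filter.Eventually.of_forall fun y => by positivity)]
  congr 1
  rw [integral_const_mul]
  have htrans : ∫ y : EuclideanSpace ℝ (Fin d), rexp (-(1/s) * ‖m - y‖^2)
      = ∫ y : EuclideanSpace ℝ (Fin d), rexp (-(1/s) * ‖y‖^2) :=
    integral_sub_left_eq_self (fun v => rexp (-(1/s) * ‖v‖^2)) volume m
  rw [htrans, GaussianFourier.integral_rexp_neg_mul_sq_norm (by positivity : (0:ℝ) < 1/s),
    finrank_euclideanSpace_fin]
  have hbase : π / (1/s) = π * s := by field_simp
  rw [hbase, hc]
  -- (2πs)^e * (2πs)^e * exp * (πs)^(d/2) = (4πs)^e * exp  with e = -(d:ℝ)/2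
  have h1 : (π*s) ^ ((d:ℝ)/2) = ((π*s) ^ (-(d:ℝ)/2))⁻¹ := by
    rw [← Real.rpow_neg (by positivity)]; congr 1; ring
  have h2 : (2*π*s) ^ (-(d:ℝ)/2) * (2*π*s) ^ (-(d:ℝ)/2) = ((2*π*s)*(2*π*s)) ^ (-(d:ℝ)/2) :=
    (Real.mul_rpow (by positivity) (by positivity)).symm
  rw [h1, h2]
  rw [show (4*π*s : ℝ) = ((2*π*s)*(2*π*s))/(π*s) by field_simp; ring, Real.div_rpow (by positivity) (by positivity)]
  field_simp

lemma cosFourier_continuous {d : ℕ} {f : EuclideanSpace ℝ (Fin d) → ℝ} (hf : Integrable f) :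
    Continuous (cosFourier d f) := by
  apply continuous_of_dominated (bound := fun w => |f w|)
  · intro ξ
    exact ((Real.continuous_cos.comp
      (continuous_const.mul (continuous_const.inner continuous_id))).aestronglyMeasurable).mul hf.1
  · intro ξ
    filter_upwards with w
    rw [norm_mul]
    calc ‖Real.cos (2 * π * (inner ℝ ξ w : ℝ))‖ * ‖f w‖ ≤ 1 * ‖f w‖ :=
          mul_le_mul_of_nonneg_right (by rw [Real.norm_eq_abs]; exact abs_cos_le_one _)
            (norm_nonneg _)
      _ = |f w| := by rw [one_mul, Real.norm_eq_abs]
  · exact hf.abs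
  · filter_upwards with w
    exact (Real.continuous_cos.comp
      (continuous_const.mul ((continuous_id.inner continuous_const)))).mul continuous_const

lemma cosFourier_le {d : ℕ} {f : EuclideanSpace ℝ (Fin d) → ℝ} (hf : Integrable f)
    (hf0 : ∀ w, 0 ≤ f w) (ξ : EuclideanSpace ℝ (Fin d)) :
    cosFourier d f ξ ≤ ∫ w, f w := by
  apply integral_mono _ hf
  · intro w
    calc Real.cos (2 * π * (inner ℝ ξ w : ℝ)) * f w ≤ 1 * f w :=
          mul_le_mul_of_nonneg_right (Real.cos_le_one _) (hf0 w)
      _ = f w := one_mul _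
  · exact hf.bdd_mul (c := 1)
      ((Real.continuous_cos.comp
        (continuous_const.mul (continuous_const.inner continuous_id))).aestronglyMeasurable)
      (Filter.Eventually.of_forall fun w => by rw [Real.norm_eq_abs]; exact abs_cos_le_one _)

lemma plancherel_gauss {d : ℕ} {f : EuclideanSpace ℝ (Fin d) → ℝ} (hf : Integrable f)
    {b : ℝ} (hb : 0 < b) :
    ∫ w, ((π/b) ^ ((d:ℝ)/2) * rexp (-(π^2) * ‖w‖^2 / b)) * f w
      = ∫ ξ, rexp (-b * ‖ξ‖^2) * cosFourier d f ξ := by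
  have hcos1 : ∀ θ : ℝ, ‖Real.cos θ‖ ≤ 1 := fun θ => by
    rw [Real.norm_eq_abs]; exact abs_cos_le_one _
  have hFint : Integrable (Function.uncurry fun (w ξ : EuclideanSpace ℝ (Fin d)) =>
      rexp (-b * ‖ξ‖^2) * Real.cos (2 * π * (inner ℝ ξ w : ℝ)) * f w)
      (volume.prod volume) := by
    simp only [Function.uncurry_def]
    apply Integrable.mono' ((hf.norm).mul_prod (integrable_rexp_gauss hb))
    · apply AEStronglyMeasurable.mul _ (hf.1.comp_quasiMeasurePreserving
        Measure.quasiMeasurePreserving_fst)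
      apply Continuous.aestronglyMeasurable
      exact (Real.continuous_exp.comp (continuous_const.mul (continuous_snd.norm.pow 2))).mul
        (Real.continuous_cos.comp (continuous_const.mul (continuous_snd.inner continuous_fst)))
    · filter_upwards with p
      rw [norm_mul, norm_mul]
      calc ‖rexp (-b * ‖p.2‖^2)‖ * ‖Real.cos (2 * π * (inner ℝ p.2 p.1 : ℝ))‖ * ‖f p.1‖
          ≤ ‖rexp (-b * ‖p.2‖^2)‖ * 1 * ‖f p.1‖ :=
            mul_le_mul_of_nonneg_right
              (mul_le_mul_of_nonneg_left (hcos1 _) (norm_nonneg _)) (norm_nonneg _)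
        _ = ‖f p.1‖ * rexp (-b * ‖p.2‖^2) := by
            rw [Real.norm_of_nonneg (exp_pos _).le]; ring
  calc ∫ w, ((π/b) ^ ((d:ℝ)/2) * rexp (-(π^2) * ‖w‖^2 / b)) * f w
      = ∫ w, (∫ ξ : EuclideanSpace ℝ (Fin d),
          rexp (-b * ‖ξ‖^2) * Real.cos (2 * π * (inner ℝ ξ w : ℝ))) * f w := by
        congr 1; funext w; congr 1
        rw [← gauss_cos hb w]
        congr 1; funext ξ
        rw [real_inner_comm]
    _ = ∫ w, ∫ ξ : EuclideanSpace ℝ (Fin d),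
          rexp (-b * ‖ξ‖^2) * Real.cos (2 * π * (inner ℝ ξ w : ℝ)) * f w := by
        congr 1; funext w; rw [← integral_mul_const]
    _ = ∫ ξ : EuclideanSpace ℝ (Fin d), ∫ w,
          rexp (-b * ‖ξ‖^2) * Real.cos (2 * π * (inner ℝ ξ w : ℝ)) * f w :=
        integral_integral_swap hFint
    _ = ∫ ξ, rexp (-b * ‖ξ‖^2) * cosFourier d f ξ := by
        congr 1; funext ξ
        rw [cosFourier, ← integral_const_mul]
        congr 1; funext w; ring

/-- Dalang-type bound: for integrable, even `f ≥ 0` with nonnegative Fourier transform,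
`∫₀^T ∫∫ p(s,x,y) p(s,x,z) f(y-z) dy dz ds ≤ C_T ∫ f̂(ξ)/(1+|ξ|²) dξ`, with `C_T` depending
only on `d` and `T`; both sides may be infinite. -/
theorem gauss_convolution_fourier_bound (d : ℕ) (hd : 1 ≤ d) (T : ℝ) (hT : 0 < T) :
    ∃ C > (0:ℝ), ∀ f : EuclideanSpace ℝ (Fin d) → ℝ,
      Integrable f → (∀ w, 0 ≤ f w) → (∀ w, f (-w) = f w) →
      (∀ ξ, 0 ≤ cosFourier d f ξ) →
      ∀ x : EuclideanSpace ℝ (Fin d),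
        (∫⁻ s in Set.Ioc (0:ℝ) T, ∫⁻ y, ∫⁻ z, ENNReal.ofReal
            (gaussKernelEuc d s x y * gaussKernelEuc d s x z * f (y - z)))
          ≤ ENNReal.ofReal C *
            ∫⁻ ξ, ENNReal.ofReal (cosFourier d f ξ / (1 + ‖ξ‖^2)) := by
  refine ⟨T + 1, by linarith, ?_⟩
  intro f hf hf0 _hfe hfpos x
  -- Step 1: the inner double integral for fixed s ∈ (0, T]
  have hinner : ∀ s ∈ Set.Ioc (0:ℝ) T,
      (∫⁻ y, ∫⁻ z, ENNReal.ofReal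
          (gaussKernelEuc d s x y * gaussKernelEuc d s x z * f (y - z)))
        = ∫⁻ ξ, ENNReal.ofReal (cosFourier d f ξ * rexp (-(4*π^2*s) * ‖ξ‖^2)) := by
    intro s hs
    have hs0 : 0 < s := hs.1
    have hb4 : (0:ℝ) < 4*π^2*s := by positivity
    -- substitute z ↦ y - w
    have hz : ∀ y : EuclideanSpace ℝ (Fin d),
        (∫⁻ z, ENNReal.ofReal (gaussKernelEuc d s x y * gaussKernelEuc d s x z * f (y - z)))
          = ∫⁻ w, ENNReal.ofReal
              (gaussKernelEuc d s x y * gaussKernelEuc d s x (y - w) * f w) := by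
      intro y
      set G : EuclideanSpace ℝ (Fin d) → ℝ≥0∞ := fun w => ENNReal.ofReal
        (gaussKernelEuc d s x y * gaussKernelEuc d s x (y - w) * f w) with hG
      have hmap : (volume : Measure (EuclideanSpace ℝ (Fin d))).map
          (fun z => y - z) = volume := Measure.map_sub_left_eq_self volume y
      calc (∫⁻ z, ENNReal.ofReal
              (gaussKernelEuc d s x y * gaussKernelEuc d s x z * f (y - z)))
          = ∫⁻ z, G ((MeasurableEquiv.subLeft y) z) := by
            apply lintegral_congr; intro z
            simp only [hG, MeasurableEquiv.subLeft, Equiv.subLeft, MeasurableEquiv.coe_mk,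
              Equiv.coe_fn_mk, sub_sub_cancel]
        _ = ∫⁻ w, G w ∂((volume : Measure (EuclideanSpace ℝ (Fin d))).map
              (MeasurableEquiv.subLeft y)) := (lintegral_map_equiv G _).symm
        _ = ∫⁻ w, G w := by
            rw [show ((volume : Measure (EuclideanSpace ℝ (Fin d))).map
              (MeasurableEquiv.subLeft y)) = volume from hmap]
    simp only [hz]
    -- split the ofReal and swap the order of integration
    have hsplit : ∀ (y w : EuclideanSpace ℝ (Fin d)),
        ENNReal.ofReal (gaussKernelEuc d s x y * gaussKernelEuc d s x (y - w) * f w)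
          = ENNReal.ofReal (gaussKernelEuc d s x y * gaussKernelEuc d s x (y - w))
            * ENNReal.ofReal (f w) := fun y w =>
      ENNReal.ofReal_mul (mul_nonneg (gaussKernelEuc_nonneg hs0 x y) (gaussKernelEuc_nonneg hs0 x _))
    simp only [hsplit]
    have hswap : (∫⁻ y, ∫⁻ w,
        ENNReal.ofReal (gaussKernelEuc d s x y * gaussKernelEuc d s x (y - w))
          * ENNReal.ofReal (f w))
        = ∫⁻ w, ∫⁻ y,
        ENNReal.ofReal (gaussKernelEuc d s x y * gaussKernelEuc d s x (y - w))
          * ENNReal.ofReal (f w) := by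
      apply lintegral_lintegral_swap
      refine AEMeasurable.mul (f := fun p : EuclideanSpace ℝ (Fin d) × EuclideanSpace ℝ (Fin d) => ENNReal.ofReal (gaussKernelEuc d s x p.1 * gaussKernelEuc d s x (p.1 - p.2))) (g := fun p => ENNReal.ofReal (f p.2)) ?_ ?_
      · apply Measurable.aemeasurable
        apply Continuous.measurable
        exact ENNReal.continuous_ofReal.comp
          (((gaussKernelEuc_continuous x).comp continuous_fst).mul
          ((gaussKernelEuc_continuous x).comp (continuous_fst.sub continuous_snd)))
      · exact ENNReal.measurable_ofReal.comp_aemeasurable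
          (hf.1.aemeasurable.comp_quasiMeasurePreserving Measure.quasiMeasurePreserving_snd)
    rw [hswap]
    have hyint : ∀ w : EuclideanSpace ℝ (Fin d),
        (∫⁻ y, ENNReal.ofReal (gaussKernelEuc d s x y * gaussKernelEuc d s x (y - w))
          * ENNReal.ofReal (f w))
        = ENNReal.ofReal (((4*π*s) ^ (-(d:ℝ)/2) * rexp (-‖w‖^2 / (4*s))) * f w) := by
      intro w
      rw [lintegral_mul_const' (ENNReal.ofReal (f w)) _ ENNReal.ofReal_ne_top,
        lintegral_gauss_prod hs0 x w, ← ENNReal.ofReal_mul (by positivity)]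
    simp only [hyint]
    -- convert to a real integral and apply the Plancherel identity for the Gaussian
    have hp2int : Integrable (fun w : EuclideanSpace ℝ (Fin d) =>
        ((4*π*s) ^ (-(d:ℝ)/2) * rexp (-‖w‖^2 / (4*s))) * f w) := by
      apply hf.bdd_mul (c := (4*π*s) ^ (-(d:ℝ)/2))
      · exact (continuous_const.mul (Real.continuous_exp.comp
          ((continuous_norm.pow 2).neg.div_const _))).aestronglyMeasurable
      · refine Filter.Eventually.of_forall fun w => ?_
        rw [Real.norm_of_nonneg (by positivity)]
        exact mul_le_of_le_one_right (by positivity)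
          (Real.exp_le_one_iff.2
            (div_nonpos_of_nonpos_of_nonneg (neg_nonpos.2 (sq_nonneg _)) (by positivity)))
    rw [← ofReal_integral_eq_lintegral_ofReal hp2int
      (Filter.Eventually.of_forall fun w => mul_nonneg (by positivity) (hf0 w))]
    have hform : ∀ w : EuclideanSpace ℝ (Fin d),
        ((4*π*s) ^ (-(d:ℝ)/2) * rexp (-‖w‖^2 / (4*s))) * f w
          = ((π/(4*π^2*s)) ^ ((d:ℝ)/2) * rexp (-(π^2) * ‖w‖^2 / (4*π^2*s))) * f w := by
      intro w
      have h1 : (π/(4*π^2*s)) = (4*π*s)⁻¹ := by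
        field_simp
      have h2 : (4*π*s) ^ (-(d:ℝ)/2) = ((4*π*s)⁻¹) ^ ((d:ℝ)/2) := by
        rw [Real.inv_rpow (by positivity), ← Real.rpow_neg (by positivity)]
        congr 1; ring
      have h3 : -‖w‖^2 / (4*s) = -(π^2) * ‖w‖^2 / (4*π^2*s) := by
        rw [div_eq_div_iff (by positivity) (by positivity)]; ring
      rw [h1, h2, h3]
    rw [show (∫ w : EuclideanSpace ℝ (Fin d),
        ((4*π*s) ^ (-(d:ℝ)/2) * rexp (-‖w‖^2 / (4*s))) * f w)
      = ∫ w : EuclideanSpace ℝ (Fin d),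
        ((π/(4*π^2*s)) ^ ((d:ℝ)/2) * rexp (-(π^2) * ‖w‖^2 / (4*π^2*s))) * f w
      from integral_congr_ae (Filter.Eventually.of_forall hform)]
    rw [plancherel_gauss hf hb4]
    -- turn the ξ-integral into a lower integral
    have hgint : Integrable (fun ξ : EuclideanSpace ℝ (Fin d) =>
        cosFourier d f ξ * rexp (-(4*π^2*s) * ‖ξ‖^2)) := by
      apply (integrable_rexp_gauss hb4).bdd_mul (c := ∫ w, f w)
        (cosFourier_continuous hf).aestronglyMeasurable
      refine Filter.Eventually.of_forall fun ξ => ?_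
      rw [Real.norm_of_nonneg (hfpos ξ)]
      exact cosFourier_le hf hf0 ξ
    rw [show (∫ ξ : EuclideanSpace ℝ (Fin d), rexp (-(4*π^2*s) * ‖ξ‖^2) * cosFourier d f ξ)
      = ∫ ξ : EuclideanSpace ℝ (Fin d), cosFourier d f ξ * rexp (-(4*π^2*s) * ‖ξ‖^2)
      from integral_congr_ae (Filter.Eventually.of_forall fun ξ => mul_comm _ _)]
    rw [ofReal_integral_eq_lintegral_ofReal hgint (Filter.Eventually.of_forall fun ξ =>
      mul_nonneg (hfpos ξ) (Real.exp_pos _).le)]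
  -- Step 2: rewrite the s-integral and swap
  rw [setLIntegral_congr_fun measurableSet_Ioc hinner]
  have hswap2 : (∫⁻ s in Set.Ioc (0:ℝ) T, ∫⁻ ξ,
      ENNReal.ofReal (cosFourier d f ξ * rexp (-(4*π^2*s) * ‖ξ‖^2)))
      = ∫⁻ ξ, ∫⁻ s in Set.Ioc (0:ℝ) T,
      ENNReal.ofReal (cosFourier d f ξ * rexp (-(4*π^2*s) * ‖ξ‖^2)) := by
    apply lintegral_lintegral_swap
    apply Measurable.aemeasurable
    apply Continuous.measurable
    exact ENNReal.continuous_ofReal.comp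
      (((cosFourier_continuous hf).comp continuous_snd).mul
      (Real.continuous_exp.comp ((continuous_const.mul continuous_fst).neg.mul
        (continuous_snd.norm.pow 2))))
  rw [hswap2]
  -- Step 3: pointwise bound in ξ
  have hbound : ∀ ξ : EuclideanSpace ℝ (Fin d),
      (∫⁻ s in Set.Ioc (0:ℝ) T,
        ENNReal.ofReal (cosFourier d f ξ * rexp (-(4*π^2*s) * ‖ξ‖^2)))
      ≤ ENNReal.ofReal (T+1) * ENNReal.ofReal (cosFourier d f ξ / (1 + ‖ξ‖^2)) := by
    intro ξ
    set a : ℝ := 4*π^2*‖ξ‖^2 with ha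
    have ha0 : 0 ≤ a := by positivity
    have harg : ∀ s : ℝ, -(4*π^2*s) * ‖ξ‖^2 = -(a*s) := fun s => by rw [ha]; ring
    have hsplit : ∀ s : ℝ, ENNReal.ofReal (cosFourier d f ξ * rexp (-(4*π^2*s) * ‖ξ‖^2))
        = ENNReal.ofReal (cosFourier d f ξ) * ENNReal.ofReal (rexp (-(a*s))) := fun s => by
      rw [harg s, ENNReal.ofReal_mul (hfpos ξ)]
    simp only [hsplit]
    rw [lintegral_const_mul' _ _ ENNReal.ofReal_ne_top]
    have hT1 : (∫⁻ s in Set.Ioc (0:ℝ) T, ENNReal.ofReal (rexp (-(a*s))))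
        ≤ ENNReal.ofReal ((T+1) / (1 + ‖ξ‖^2)) := by
      rcases le_or_gt (T * ‖ξ‖^2) 1 with hcase | hcase
      · -- use the bound exp ≤ 1
        calc (∫⁻ s in Set.Ioc (0:ℝ) T, ENNReal.ofReal (rexp (-(a*s))))
            ≤ ∫⁻ _ in Set.Ioc (0:ℝ) T, 1 := by
              apply setLIntegral_mono' measurableSet_Ioc
              intro s hs
              exact ENNReal.ofReal_le_one.2 (Real.exp_le_one_iff.2
                (by nlinarith [hs.1, ha0, sq_nonneg ‖ξ‖, Real.pi_pos]))
          _ = ENNReal.ofReal T := by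
              rw [setLIntegral_one, Real.volume_Ioc, sub_zero]
          _ ≤ ENNReal.ofReal ((T+1) / (1 + ‖ξ‖^2)) := by
              apply ENNReal.ofReal_le_ofReal
              rw [le_div_iff₀ (by positivity)]
              nlinarith [hcase, hT, sq_nonneg ‖ξ‖]
      · -- here a > 0; use the full exponential integral
        have hn0 : 0 < ‖ξ‖^2 := by nlinarith [hT]
        have ha' : 0 < a := by positivity
        calc (∫⁻ s in Set.Ioc (0:ℝ) T, ENNReal.ofReal (rexp (-(a*s))))
            ≤ ∫⁻ s in Set.Ioi (0:ℝ), ENNReal.ofReal (rexp (-(a*s))) :=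
              lintegral_mono_set Set.Ioc_subset_Ioi_self
          _ = ENNReal.ofReal (∫ s in Set.Ioi (0:ℝ), rexp (-(a*s))) := by
              rw [ofReal_integral_eq_lintegral_ofReal
                (by simpa [neg_mul] using (exp_neg_integrableOn_Ioi 0 ha').integrable)
                (Filter.Eventually.of_forall fun s => (Real.exp_pos _).le)]
          _ = ENNReal.ofReal (1/a) := by
              congr 1
              have h := integral_comp_mul_left_Ioi (fun u => rexp (-u)) 0 ha'
              simp only [mul_zero, smul_eq_mul, integral_exp_neg_Ioi, neg_zero,
                Real.exp_zero, mul_one] at h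
              exact h.trans (one_div a).symm
          _ ≤ ENNReal.ofReal ((T+1) / (1 + ‖ξ‖^2)) := by
              apply ENNReal.ofReal_le_ofReal
              rw [div_le_div_iff₀ ha' (by positivity), ha]
              have hpi2 : (9:ℝ) ≤ π^2 := by nlinarith [Real.pi_gt_three, Real.pi_pos]
              nlinarith [mul_le_mul_of_nonneg_right hpi2 hn0.le,
                mul_le_mul_of_nonneg_right hpi2 (mul_nonneg hT.le hn0.le),
                hcase, hn0, hT]
    calc ENNReal.ofReal (cosFourier d f ξ) *
          (∫⁻ s in Set.Ioc (0:ℝ) T, ENNReal.ofReal (rexp (-(a*s))))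
        ≤ ENNReal.ofReal (cosFourier d f ξ) * ENNReal.ofReal ((T+1) / (1 + ‖ξ‖^2)) := by
          exact mul_le_mul_right hT1 _
      _ = ENNReal.ofReal (T+1) * ENNReal.ofReal (cosFourier d f ξ / (1 + ‖ξ‖^2)) := by
          rw [← ENNReal.ofReal_mul (hfpos ξ), ← ENNReal.ofReal_mul (by linarith)]
          congr 1
          field_simp
  calc (∫⁻ ξ, ∫⁻ s in Set.Ioc (0:ℝ) T,
        ENNReal.ofReal (cosFourier d f ξ * rexp (-(4*π^2*s) * ‖ξ‖^2)))
      ≤ ∫⁻ ξ, ENNReal.ofReal (T+1) * ENNReal.ofReal (cosFourier d f ξ / (1 + ‖ξ‖^2)) :=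
        lintegral_mono hbound
    _ = ENNReal.ofReal (T+1) * ∫⁻ ξ, ENNReal.ofReal (cosFourier d f ξ / (1 + ‖ξ‖^2)) :=
        lintegral_const_mul' _ _ ENNReal.ofReal_ne_top
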